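/- Let G_n be a weakly convergent sequence of bounded-degree graphs with limit measure μ on the space Gr_d of rooted countable graphs, and let (G_n^1, ..., G_n^K) be a K-splitting of the sequence, i.e., the G_n^i are vertex-disjoint spanned subgraphs covering V(G_n), the number of edges between distinct parts is o(|V(G_n)|), the ratios |V(G_n^i)|/|V(G_n)| converge to a_i, and each part with a_i ≠ 0 is a weakly convergent graph sequence with limit measure μ_i. Then μ = Σ_{i : a_i ≠ 0} a_i · μ_i. -/

import Mathlib

open MeasureTheory Filter Topology

/-- A rooted `(r,d)`-ball: a finite connected rooted graph with maximum degree at most `d`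
in which every vertex is within distance `rad` of the root. -/
structure Ball (d : ℕ) where
  rad : ℕ
  n : ℕ
  graph : SimpleGraph (Fin n)
  root : Fin n
  conn : graph.Connected
  deg : ∀ v, (graph.neighborSet v).ncard ≤ d
  small : ∀ v, graph.dist root v ≤ rad

/-- Rooted isomorphism of rooted graphs. -/
def RootedIso {V W : Type*} (G : SimpleGraph V) (x : V) (H : SimpleGraph W) (y : W) : Prop :=
  ∃ e : G ≃g H, e x = y

/-- The vertex set of the ball of radius `r` around `x`. -/
def ballVerts {V : Type*} (G : SimpleGraph V) (r : ℕ) (x : V) : Set V :=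
  {y | G.Reachable x y ∧ G.dist x y ≤ r}

lemma rootMemBall {V : Type*} (G : SimpleGraph V) (r : ℕ) (x : V) : x ∈ ballVerts G r x :=
  ⟨SimpleGraph.Reachable.refl x, by simp [SimpleGraph.dist_self]⟩

/-- The rooted `r`-ball of `G` around `x` is rooted-isomorphic to the rooted graph `(H,y)`. -/
def ballIso {V W : Type*} (G : SimpleGraph V) (r : ℕ) (x : V)
    (H : SimpleGraph W) (y : W) : Prop :=
  RootedIso (G.induce (ballVerts G r x)) ⟨x, rootMemBall G r x⟩ H y

/-- `pfreq G α` is the fraction of vertices of `G` whose rooted `α.rad`-ball is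
isomorphic to the rooted ball `α`. -/
noncomputable def pfreq {V : Type*} {d : ℕ} (G : SimpleGraph V) (α : Ball d) : ℝ :=
  ({x : V | ballIso G α.rad x α.graph α.root}).ncard / (Nat.card V)

/-- The statistical distance of two finite graphs with respect to an enumeration `E`
of all rooted `(r,d)`-balls. -/
noncomputable def ds {d : ℕ} (E : ℕ → Ball d) {V W : Type*}
    (G : SimpleGraph V) (H : SimpleGraph W) : ℝ :=
  ∑' i : ℕ, (1 / 2 : ℝ) ^ (i + 1) * |pfreq G (E i) - pfreq H (E i)|

/-- `E` enumerates all rooted `(r,d)`-balls up to rooted isomorphism. -/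
def Covers {d : ℕ} (E : ℕ → Ball d) : Prop :=
  ∀ β : Ball d, ∃ i, (E i).rad = β.rad ∧ RootedIso (E i).graph (E i).root β.graph β.root

/-- Maximum degree of `G` is at most `d`. -/
def DegLe {V : Type*} (G : SimpleGraph V) (d : ℕ) : Prop :=
  ∀ v, (G.neighborSet v).ncard ≤ d

section Helpers
variable {V : Type*} {G : SimpleGraph V}

lemma walk_lift (P : Set V) :
    ∀ {x y : V} (w : G.Walk x y) (h : ∀ u ∈ w.support, u ∈ P),
    ∃ w' : (G.induce P).Walk ⟨x, h x w.start_mem_support⟩ ⟨y, h y w.end_mem_support⟩,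
      w'.length = w.length := by
  intro x y w
  induction w with
  | nil => intro h; exact ⟨SimpleGraph.Walk.nil, rfl⟩
  | cons adj p ih =>
      intro h
      obtain ⟨p', hp'⟩ := ih (fun u hu => h u (by simp [hu]))
      refine ⟨SimpleGraph.Walk.cons (by exact adj) p', by show p'.length + 1 = _; rw [hp']; rfl⟩

/-- projection homomorphism from an induced subgraph -/
def inducedHom (G : SimpleGraph V) (P : Set V) : G.induce P →g G :=
  ⟨Subtype.val, fun h => h⟩

lemma support_mem_ball {r : ℕ} {x y : V} (w : G.Walk x y) (hw : w.length ≤ r) {u : V}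
    (hu : u ∈ w.support) : u ∈ ballVerts G r x := by
  haveI := Classical.decEq V
  exact ⟨⟨w.takeUntil u hu⟩, le_trans (SimpleGraph.dist_le _)
    (le_trans (SimpleGraph.Walk.length_takeUntil_le w hu) hw)⟩

lemma ballVerts_induce {P : Set V} {x : V} (hx : x ∈ P)
    {r : ℕ} (hsub : ballVerts G r x ⊆ P) (z : P) :
    z ∈ ballVerts (G.induce P) r ⟨x, hx⟩ ↔ z.1 ∈ ballVerts G r x := by
  constructor
  · rintro ⟨hreach, hdist⟩
    obtain ⟨w', hw'⟩ := hreach.exists_walk_length_eq_dist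
    have hle := SimpleGraph.dist_le (w'.map (inducedHom G P))
    rw [SimpleGraph.Walk.length_map, hw'] at hle
    exact ⟨⟨w'.map (inducedHom G P)⟩, le_trans hle hdist⟩
  · rintro ⟨hreach, hdist⟩
    obtain ⟨w, hw⟩ := hreach.exists_walk_length_eq_dist
    have hws : ∀ u ∈ w.support, u ∈ P := fun u hu =>
      hsub (support_mem_ball w (hw ▸ hdist) hu)
    obtain ⟨w', hw'⟩ := walk_lift P w hws
    obtain ⟨z, hzP⟩ := z
    refine ⟨⟨w'⟩, le_trans (SimpleGraph.dist_le w') ?_⟩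
    rw [hw', hw]; exact hdist

lemma rootedIso_congr {V2 W : Type*} {G2 : SimpleGraph V2}
    {x1 : V} {x2 : V2} (e : G ≃g G2) (he : e x1 = x2)
    {H : SimpleGraph W} {y : W} : RootedIso G x1 H y ↔ RootedIso G2 x2 H y := by
  constructor
  · rintro ⟨f, hf⟩
    exact ⟨e.symm.trans f, by simp [← he, hf]⟩
  · rintro ⟨f, hf⟩
    exact ⟨e.trans f, by simp [he, hf]⟩

lemma ballIso_induce_iff {W : Type*} {P : Set V} {x : V} (hx : x ∈ P)
    {r : ℕ} (hsub : ballVerts G r x ⊆ P) {H : SimpleGraph W} {y : W} :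
    ballIso G r x H y ↔ ballIso (G.induce P) r ⟨x, hx⟩ H y := by
  set x' : P := ⟨x, hx⟩
  have key := ballVerts_induce hx hsub
  refine rootedIso_congr (G2 := (G.induce P).induce (ballVerts (G.induce P) r x'))
    ?_ ?_ |>.trans Iff.rfl
  · refine ⟨⟨fun z => ⟨⟨z.1, hsub z.2⟩, (key _).mpr z.2⟩,
      fun z => ⟨z.1.1, (key _).mp z.2⟩, fun z => rfl, fun z => rfl⟩, ?_⟩
    intro a b
    simp [SimpleGraph.comap_adj]
  · rfl

lemma exists_cross {β : Type*} (f : V → β) :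
    ∀ {x y : V} (w : G.Walk x y), f x ≠ f y →
      ∃ u ∈ w.support, ∃ v, G.Adj u v ∧ f u ≠ f v := by
  intro x y w
  induction w with
  | nil => intro h; exact absurd rfl h
  | @cons x z y adj p ih =>
      intro h
      by_cases hxz : f x = f z
      · obtain ⟨u, hu, hv⟩ := ih (hxz ▸ h)
        exact ⟨u, by simp [hu], hv⟩
      · exact ⟨x, by simp, z, adj, hxz⟩

lemma ball_mono_sub {r : ℕ} {x : V} :
    ballVerts G (r+1) x ⊆ ⋃ u ∈ ballVerts G r x, insert u (G.neighborSet u) := by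
  rintro y ⟨hreach, hdist⟩
  obtain ⟨w, hw⟩ := hreach.exists_walk_length_eq_dist
  rcases hrev : w.reverse with _ | ⟨adj, p⟩
  · exact Set.mem_biUnion (⟨SimpleGraph.Reachable.refl _, by simp [SimpleGraph.dist_self]⟩ :
      _ ∈ ballVerts G r _) (Set.mem_insert _ _)
  · rename_i u
    have hlen : p.length + 1 = w.length := by
      have := congrArg SimpleGraph.Walk.length hrev
      simpa using this.symm
    have hu : u ∈ ballVerts G r x := by
      refine ⟨⟨p.reverse⟩, le_trans (SimpleGraph.dist_le p.reverse) ?_⟩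
      rw [SimpleGraph.Walk.length_reverse]
      omega
    exact Set.mem_biUnion hu (Set.mem_insert_of_mem _ adj.symm)

lemma ncard_biUnion_le {β : Type*} [Finite β] {ι : Type*} [Fintype ι] (T : Set ι)
    (f : ι → Set β) (m : ℕ) (hf : ∀ u, (f u).ncard ≤ m) :
    (⋃ u ∈ T, f u).ncard ≤ T.ncard * m := by
  classical
  haveI : Fintype β := Fintype.ofFinite β
  have hsub : (⋃ u ∈ T, f u).toFinset ⊆ T.toFinset.biUnion (fun u => (f u).toFinset) := by
    intro x hx
    simp only [Set.mem_toFinset, Set.mem_iUnion] at hx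
    obtain ⟨u, hu, hx⟩ := hx
    simp only [Finset.mem_biUnion, Set.mem_toFinset]
    exact ⟨u, hu, hx⟩
  calc (⋃ u ∈ T, f u).ncard = (⋃ u ∈ T, f u).toFinset.card := by
        rw [Set.ncard_eq_toFinset_card']
    _ ≤ (T.toFinset.biUnion (fun u => (f u).toFinset)).card := Finset.card_le_card hsub
    _ ≤ ∑ u ∈ T.toFinset, (f u).toFinset.card := Finset.card_biUnion_le
    _ ≤ T.toFinset.card * m := by
        refine Finset.sum_le_card_nsmul _ _ m (fun u _ => ?_)
        rw [← Set.ncard_eq_toFinset_card']; exact hf u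
    _ = T.ncard * m := by rw [Set.ncard_eq_toFinset_card']

lemma ball_card_le [Finite V] {d : ℕ} (hdeg : DegLe G d) :
    ∀ (r : ℕ) (x : V), (ballVerts G r x).ncard ≤ (d+1)^r := by
  intro r
  induction r with
  | zero =>
      intro x
      have : ballVerts G 0 x = {x} := by
        ext y
        simp only [ballVerts, Set.mem_setOf_eq, Set.mem_singleton_iff, Nat.le_zero]
        constructor
        · rintro ⟨hr, hd⟩; exact (hr.dist_eq_zero_iff.mp hd).symm
        · rintro rfl; exact ⟨SimpleGraph.Reachable.refl _, SimpleGraph.dist_self ..⟩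
      simp [this]
  | succ r ih =>
      intro x
      haveI : Fintype V := Fintype.ofFinite V
      calc (ballVerts G (r+1) x).ncard
          ≤ (⋃ u ∈ ballVerts G r x, insert u (G.neighborSet u)).ncard :=
            Set.ncard_le_ncard ball_mono_sub (Set.toFinite _)
        _ ≤ (ballVerts G r x).ncard * (d+1) := by
            refine ncard_biUnion_le (ι := V) _ _ (d+1) (fun u => ?_)
            calc (insert u (G.neighborSet u)).ncard
                ≤ (G.neighborSet u).ncard + 1 := Set.ncard_insert_le _ _
              _ ≤ d + 1 := by have := hdeg u; omega
        _ ≤ (d+1)^r * (d+1) := Nat.mul_le_mul_right _ (ih x)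
        _ = (d+1)^(r+1) := by ring

lemma ncard_disjUnion {β : Type*} [Finite β] {ι : Type*} (s : Finset ι) (f : ι → Set β)
    (hdisj : ∀ i ∈ s, ∀ j ∈ s, i ≠ j → Disjoint (f i) (f j)) :
    (⋃ i ∈ s, f i).ncard = ∑ i ∈ s, (f i).ncard := by
  classical
  induction s using Finset.induction with
  | empty => simp
  | @insert a s ha ih =>
      rw [Finset.sum_insert ha]
      have hU : (⋃ i ∈ insert a s, f i) = f a ∪ ⋃ i ∈ s, f i := by
        simp [Set.iUnion_or, Set.iUnion_union_distrib]
      rw [hU, Set.ncard_union_eq ?_ (Set.toFinite _) (Set.toFinite _),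
        ih (fun i hi j hj hij => hdisj i (by simp [hi]) j (by simp [hj]) hij)]
      refine Set.disjoint_iUnion₂_right.mpr (fun i hi => ?_)
      exact hdisj a (by simp) i (by simp [hi]) (fun h => ha (h ▸ hi))

lemma pfreq_nonneg {d : ℕ} (α : Ball d) : 0 ≤ pfreq G α :=
  div_nonneg (Nat.cast_nonneg _) (Nat.cast_nonneg _)

lemma pfreq_le_one [Finite V] {d : ℕ} (α : Ball d) : pfreq G α ≤ 1 := by
  unfold pfreq
  rcases Nat.eq_zero_or_pos (Nat.card V) with h | h
  · simp [h]
  · rw [div_le_one (by exact_mod_cast h)]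
    exact_mod_cast (Set.ncard_le_ncard (Set.subset_univ _) Set.finite_univ).trans
      (le_of_eq (Set.ncard_univ V))

end Helpers

section Counting
variable {V : Type*} {d K : ℕ}

def partSet (part : V → Fin K) (i : Fin K) : Set V := {x | part x = i}

def cntSet (G : SimpleGraph V) (α : Ball d) : Set V :=
  {x | ballIso G α.rad x α.graph α.root}

def BSet (G : SimpleGraph V) (part : V → Fin K) (i : Fin K) (α : Ball d) : Set V :=
  Subtype.val '' cntSet (G.induce (partSet part i)) α

def badSet (G : SimpleGraph V) (part : V → Fin K) (r : ℕ) : Set V :=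
  {x | ∃ y ∈ ballVerts G r x, ∃ z, G.Adj y z ∧ part y ≠ part z}

lemma pfreq_eq (G : SimpleGraph V) (α : Ball d) :
    pfreq G α = (cntSet G α).ncard / Nat.card V := rfl

lemma BSet_subset {G : SimpleGraph V} {part : V → Fin K} {i : Fin K} {α : Ball d} :
    BSet G part i α ⊆ partSet part i := by
  rintro x ⟨⟨x0, h0⟩, _, rfl⟩
  exact h0

lemma mem_cnt_iff {G : SimpleGraph V} {part : V → Fin K} {α : Ball d}
    {x : V} (hx : x ∉ badSet G part α.rad) :
    x ∈ cntSet G α ↔ x ∈ ⋃ i, BSet G part i α := by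
  have hsub : ballVerts G α.rad x ⊆ partSet part (part x) := by
    intro y hy
    by_contra hne
    obtain ⟨hreach, hdist⟩ := hy
    obtain ⟨w, hw⟩ := hreach.exists_walk_length_eq_dist
    obtain ⟨u, hu, v, huv, hne'⟩ := exists_cross part w (fun h => hne h.symm)
    exact hx ⟨u, support_mem_ball w (hw ▸ hdist) hu, v, huv, hne'⟩
  have hmem : x ∈ partSet part (part x) := rfl
  rw [show (x ∈ cntSet G α) = ballIso G α.rad x α.graph α.root from rfl,
    ballIso_induce_iff hmem hsub]
  constructor
  · intro h
    exact Set.mem_iUnion.mpr ⟨part x, ⟨⟨x, hmem⟩, h, rfl⟩⟩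
  · intro h
    obtain ⟨i, hxB⟩ := Set.mem_iUnion.mp h
    obtain ⟨⟨x0, hx0i⟩, hmem0, rfl⟩ := hxB
    have hq : part x0 = i := hx0i
    subst hq
    exact hmem0

lemma BSet_ncard_sum [Finite V] (G : SimpleGraph V) (part : V → Fin K) (α : Ball d) :
    (⋃ i, BSet G part i α).ncard = ∑ i : Fin K, (BSet G part i α).ncard := by
  rw [show (⋃ i, BSet G part i α) = ⋃ i ∈ Finset.univ, BSet G part i α by simp]
  refine ncard_disjUnion _ _ (fun i _ j _ hij => ?_)
  refine Set.disjoint_left.mpr (fun x hxi hxj => ?_)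
  exact hij ((BSet_subset hxi).symm.trans (BSet_subset hxj))

lemma BSet_ncard (G : SimpleGraph V) (part : V → Fin K) (i : Fin K) (α : Ball d) :
    (BSet G part i α).ncard = (cntSet (G.induce (partSet part i)) α).ncard :=
  Set.ncard_image_of_injective _ Subtype.val_injective

lemma badSet_ncard_le [Finite V] {r : ℕ} {G : SimpleGraph V} (hdeg : DegLe G d)
    (part : V → Fin K) :
    (badSet G part r).ncard ≤
      ({pq : V × V | G.Adj pq.1 pq.2 ∧ part pq.1 ≠ part pq.2}).ncard * (d+1)^r := by
  classical
  haveI : Fintype V := Fintype.ofFinite V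
  set Ends : Set V := {y | ∃ z, G.Adj y z ∧ part y ≠ part z} with hEnds
  have h1 : badSet G part r ⊆ ⋃ y ∈ Ends, ballVerts G r y := by
    rintro x ⟨y, hy, z, hadj, hne⟩
    refine Set.mem_biUnion (show y ∈ Ends from ⟨z, hadj, hne⟩) ?_
    exact ⟨hy.1.symm, by rw [SimpleGraph.dist_comm]; exact hy.2⟩
  have h2 : Ends.ncard ≤ ({pq : V × V | G.Adj pq.1 pq.2 ∧ part pq.1 ≠ part pq.2}).ncard := by
    refine Set.ncard_le_ncard_of_injOn
      (fun y => (y, if h : ∃ z, G.Adj y z ∧ part y ≠ part z then h.choose else y)) ?_ ?_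
      (Set.toFinite _)
    · intro y hy
      have hy' : ∃ z, G.Adj y z ∧ part y ≠ part z := hy
      simp only [Set.mem_setOf_eq, dif_pos hy']
      exact hy'.choose_spec
    · intro y _ y' _ h
      exact congrArg Prod.fst h
  calc (badSet G part r).ncard ≤ (⋃ y ∈ Ends, ballVerts G r y).ncard :=
        Set.ncard_le_ncard h1 (Set.toFinite _)
    _ ≤ Ends.ncard * (d+1)^r := ncard_biUnion_le _ _ _ (fun u => ball_card_le hdeg r u)
    _ ≤ _ := Nat.mul_le_mul_right _ h2

end Counting

/-- If `{G_n}` converges weakly to the limit statistics `μ` and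
`(G_n^1,…,G_n^K)` is a `K`-splitting of the sequence, given by partitioning the vertex
set into `K` parts with `o(|V(G_n)|)` edges between distinct parts, with part ratios
converging to `a_i` and the parts with `a_i ≠ 0` weakly convergent with limit
statistics `μ_i`, then `μ = Σ_{i : a_i ≠ 0} a_i·μ_i`. -/
theorem splitting_limit {d : ℕ} (V : ℕ → Type) (hfin : ∀ n, Finite (V n))
    (G : ∀ n, SimpleGraph (V n)) (hdeg : ∀ n, DegLe (G n) d)
    (hcard : Tendsto (fun n => Nat.card (V n)) atTop atTop)
    (μ : Ball d → ℝ)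
    (hμ : ∀ α : Ball d, Tendsto (fun n => pfreq (G n) α) atTop (𝓝 (μ α)))
    (K : ℕ) (part : ∀ n, V n → Fin K)
    (hedges : Tendsto
      (fun n => (({pq : V n × V n |
          (G n).Adj pq.1 pq.2 ∧ part n pq.1 ≠ part n pq.2}).ncard : ℝ) / Nat.card (V n))
      atTop (𝓝 0))
    (a : Fin K → ℝ)
    (ha : ∀ i, Tendsto
      (fun n => (Nat.card {x : V n // part n x = i} : ℝ) / Nat.card (V n)) atTop (𝓝 (a i)))
    (μi : Fin K → Ball d → ℝ)
    (hμi : ∀ i, a i ≠ 0 → ∀ α : Ball d,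
      Tendsto (fun n => pfreq ((G n).induce {x : V n | part n x = i}) α) atTop
        (𝓝 (μi i α))) :
    ∀ α : Ball d, μ α = ∑ i : Fin K, a i * μi i α := by
  intro α
  classical
  haveI : ∀ n, Finite (V n) := hfin
  -- The weighted sum of part frequencies
  set F : ℕ → ℝ := fun n => ∑ i : Fin K,
    (Nat.card {x : V n // part n x = i} : ℝ) / Nat.card (V n) *
      pfreq ((G n).induce (partSet (part n) i)) α with hFdef
  have hF : Tendsto F atTop (𝓝 (∑ i : Fin K, a i * μi i α)) := by
    refine tendsto_finset_sum _ (fun i _ => ?_)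
    by_cases hai : a i = 0
    · rw [hai, zero_mul]
      have h0 : Tendsto (fun n =>
          (Nat.card {x : V n // part n x = i} : ℝ) / Nat.card (V n)) atTop (𝓝 0) :=
        hai ▸ ha i
      refine squeeze_zero_norm (fun n => ?_) (by simpa using h0.abs)
      rw [norm_mul]
      refine mul_le_of_le_one_right (norm_nonneg _) ?_
      rw [Real.norm_eq_abs, abs_le]
      exact ⟨le_trans (by norm_num) (pfreq_nonneg α), pfreq_le_one α⟩
    · exact (ha i).mul (hμi i hai α)
  -- F n equals the union count over N
  have hFeq : ∀ n, F n =
      ((⋃ i, BSet (G n) (part n) i α).ncard : ℝ) / Nat.card (V n) := by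
    intro n
    rw [hFdef, BSet_ncard_sum, Nat.cast_sum, Finset.sum_div]
    refine Finset.sum_congr rfl (fun i _ => ?_)
    rw [BSet_ncard, pfreq_eq]
    have hcc : Nat.card {x : V n // part n x = i} = Nat.card ↥(partSet (part n) i) := rfl
    by_cases hc : Nat.card {x : V n // part n x = i} = 0
    · haveI : IsEmpty {x : V n // part n x = i} :=
        (Nat.card_eq_zero.mp hc).resolve_right (fun h => h.not_finite (by infer_instance))
      haveI : IsEmpty ↥(partSet (part n) i) := ‹IsEmpty {x : V n // part n x = i}›
      rw [hc, (Set.eq_empty_of_isEmpty (cntSet ((G n).induce (partSet (part n) i)) α))]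
      simp
    · rw [← hcc]
      have hc' : (Nat.card {x : V n // part n x = i} : ℝ) ≠ 0 := Nat.cast_ne_zero.mpr hc
      rw [div_mul_div_comm, mul_comm ((Nat.card (V n) : ℝ)), mul_div_mul_left _ _ hc']
  -- the pointwise error bound
  have hdiff : ∀ n, |pfreq (G n) α - F n| ≤
      ((d+1)^α.rad : ℝ) * ((({pq : V n × V n | (G n).Adj pq.1 pq.2 ∧
        part n pq.1 ≠ part n pq.2}).ncard : ℝ) / Nat.card (V n)) := by
    intro n
    rw [hFeq n, pfreq_eq]
    set N : ℝ := (Nat.card (V n) : ℝ) with hN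
    have hN0 : 0 ≤ N := Nat.cast_nonneg _
    set a1 : ℕ := (cntSet (G n) α).ncard
    set b1 : ℕ := (⋃ i, BSet (G n) (part n) i α).ncard
    set s1 : ℕ := (badSet (G n) (part n) α.rad).ncard with hs1
    have hAB : a1 ≤ b1 + s1 := by
      refine le_trans (Set.ncard_le_ncard ?_ (Set.toFinite _)) (Set.ncard_union_le _ _)
      intro x hx
      by_cases hxS : x ∈ badSet (G n) (part n) α.rad
      · exact Or.inr hxS
      · exact Or.inl ((mem_cnt_iff hxS).mp hx)
    have hBA : b1 ≤ a1 + s1 := by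
      refine le_trans (Set.ncard_le_ncard ?_ (Set.toFinite _)) (Set.ncard_union_le _ _)
      intro x hx
      by_cases hxS : x ∈ badSet (G n) (part n) α.rad
      · exact Or.inr hxS
      · exact Or.inl ((mem_cnt_iff hxS).mpr hx)
    have habs : |(a1 : ℝ) / N - (b1 : ℝ) / N| ≤ (s1 : ℝ) / N := by
      rw [div_sub_div_same, abs_div, abs_of_nonneg hN0]
      refine div_le_div_of_nonneg_right ?_ hN0
      rw [abs_sub_le_iff]
      constructor
      · rw [sub_le_iff_le_add, add_comm]
        exact_mod_cast hAB
      · rw [sub_le_iff_le_add, add_comm]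
        exact_mod_cast hBA
    refine habs.trans ?_
    have hsle : s1 ≤ ({pq : V n × V n | (G n).Adj pq.1 pq.2 ∧
        part n pq.1 ≠ part n pq.2}).ncard * (d+1)^α.rad :=
      badSet_ncard_le (hdeg n) (part n)
    rw [mul_div_assoc']
    refine div_le_div_of_nonneg_right ?_ hN0
    calc (s1 : ℝ) ≤ (({pq : V n × V n | (G n).Adj pq.1 pq.2 ∧
            part n pq.1 ≠ part n pq.2}).ncard : ℝ) * (d+1)^α.rad := by exact_mod_cast hsle
        _ = _ := by ring
  have hzero : Tendsto (fun n => pfreq (G n) α - F n) atTop (𝓝 0) := by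
    refine squeeze_zero_norm hdiff ?_
    have := hedges.const_mul (((d+1)^α.rad : ℝ))
    simpa using this
  have hlim : Tendsto (fun n => pfreq (G n) α) atTop (𝓝 (∑ i : Fin K, a i * μi i α)) := by
    have := hzero.add hF
    rw [zero_add] at this
    simpa using this
  exact tendsto_nhds_unique (hμ α) hlim
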